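/- A finitely generated projective module of constant rank n over a commutative semilocal ring is free of rank n. -/

import Mathlib

/-- A finitely generated projective module of constant rank `n` over a
commutative semilocal ring (finitely many maximal ideals) is free of rank `n`:
if the localization of `P` at every prime ideal is free of rank `n`, then
`P ≅ Aⁿ`. -/
theorem projective_constant_rank_free_of_semilocal
    (A : Type*) [CommRing A] (hsl : {I : Ideal A | I.IsMaximal}.Finite)
    (P : Type*) [AddCommGroup P] [Module A P]
    [Module.Finite A P] [Module.Projective A P] (n : ℕ)
    (hrank : ∀ (Q : Ideal A) (hQ : Q.IsPrime),
      Nonempty (Module.Basis (Fin n) (Localization (@Ideal.primeCompl A _ Q hQ))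
        (LocalizedModule (@Ideal.primeCompl A _ Q hQ) P))) :
    Nonempty (Module.Basis (Fin n) A P) := by
  classical
  haveI : Fintype {I : Ideal A | I.IsMaximal} := hsl.fintype
  set ι := {I : Ideal A | I.IsMaximal} with hι
  have hmax : ∀ m : ι, (m : Ideal A).IsMaximal := fun m => m.2
  -- the multiplicative complements of the maximal ideals
  let S : ι → Submonoid A := fun m => @Ideal.primeCompl A _ m.1 (hmax m).isPrime
  -- choose elements of `P` whose images give a spanning set of each localization
  have hb : ∀ m : ι, ∃ p : Fin n → P,
      Submodule.span (Localization (S m))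
        (Set.range fun j => (LocalizedModule.mk (p j) 1 : LocalizedModule (S m) P)) = ⊤ := by
    intro m
    haveI := (hmax m).isPrime
    obtain ⟨b0⟩ := hrank m.1 (hmax m).isPrime
    have hrep : ∀ j, ∃ (q : P) (s : S m), b0 j = LocalizedModule.mk q s := fun j =>
      LocalizedModule.induction_on (fun q s => ⟨q, s, rfl⟩) (b0 j)
    choose q s hqs using hrep
    have hunit : ∀ j, IsUnit (algebraMap A (Localization (S m)) (s j)) := fun j =>
      IsLocalization.map_units _ (s j)
    refine ⟨q, ?_⟩
    have hspan := (b0.isUnitSMul hunit).span_eq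
    have hre : (Set.range fun j => (LocalizedModule.mk (q j) 1 : LocalizedModule (S m) P))
        = Set.range (b0.isUnitSMul hunit) := by
      refine congrArg Set.range (funext fun j => ?_)
      rw [Module.Basis.isUnitSMul_apply, hqs j, algebraMap_smul, LocalizedModule.smul'_mk]
      exact (LocalizedModule.mk_cancel (s j) (q j)).symm
    rw [hre, hspan]
  choose p hp using hb
  -- CRT elements: `e m ≡ 1 mod m`, `e m ∈ m'` for `m' ≠ m`
  have hpair : Pairwise (Function.onFun IsCoprime fun m : ι => (m : Ideal A)) := by
    intro a b hab
    simp only [Function.onFun]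
    rw [Ideal.isCoprime_iff_sup_eq]
    by_contra h
    exact hab (Subtype.ext (((hmax a).eq_of_le h le_sup_left).trans
      ((hmax b).eq_of_le h le_sup_right).symm))
  have he : ∀ m : ι, ∃ e : A,
      e - 1 ∈ (m : Ideal A) ∧ ∀ m' : ι, m' ≠ m → e ∈ (m' : Ideal A) := by
    intro m
    obtain ⟨y, hy⟩ := Ideal.quotientInfToPiQuotient_surj hpair
      (fun i => if i = m then 1 else 0)
    obtain ⟨r, rfl⟩ := Ideal.Quotient.mk_surjective y
    refine ⟨r, ?_, ?_⟩
    · have h1 := congrFun hy m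
      rw [Ideal.quotientInfToPiQuotient_mk', if_pos rfl] at h1
      have h2 : Ideal.Quotient.mk (m : Ideal A) r = Ideal.Quotient.mk (m : Ideal A) 1 := by
        simpa using h1
      exact (Ideal.Quotient.eq).mp h2
    · intro m' hm'
      have h1 := congrFun hy m'
      rw [Ideal.quotientInfToPiQuotient_mk', if_neg hm'] at h1
      exact Ideal.Quotient.eq_zero_iff_mem.mp h1
  choose e he1 he2 using he
  -- the global candidate generators
  set x : Fin n → P := fun j => ∑ m : ι, e m • p m j with hx
  set f : (Fin n →₀ A) →ₗ[A] P := Finsupp.linearCombination A x with hf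
  have hfx : ∀ j, f (Finsupp.single j 1) = x j := fun j => by
    rw [hf, Finsupp.linearCombination_single, one_smul]
  have hbij : Function.Bijective f := by
    apply bijective_of_localized_maximal
    intro J hJ
    haveI := hJ.isPrime
    set m₀ : ι := ⟨J, hJ⟩ with hm₀
    set Aloc := Localization J.primeCompl with hAloc
    set Ploc := LocalizedModule J.primeCompl P with hPloc
    haveI : Module.Finite Aloc Ploc :=
      Module.Finite.of_isLocalizedModule J.primeCompl
        (LocalizedModule.mkLinearMap J.primeCompl P)
    set F := LocalizedModule.map J.primeCompl f with hF
    -- step 1 : the images of `x j` and `p m₀ j` agree modulo `𝔪 • ⊤`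
    have key : ∀ j, (LocalizedModule.mk (x j) 1 : Ploc) - LocalizedModule.mk (p m₀ j) 1
        ∈ (IsLocalRing.maximalIdeal Aloc) • (⊤ : Submodule Aloc Ploc) := by
      intro j
      have hsmul : ∀ (a : A) (v : Ploc), a ∈ J →
          a • v ∈ (IsLocalRing.maximalIdeal Aloc) • (⊤ : Submodule Aloc Ploc) := by
        intro a v ha
        rw [← algebraMap_smul Aloc a v]
        exact Submodule.smul_mem_smul
          ((IsLocalization.AtPrime.to_map_mem_maximal_iff Aloc J a).mpr ha) trivial
      have hmk : (LocalizedModule.mk (x j) 1 : Ploc)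
          = ∑ m : ι, e m • (LocalizedModule.mk (p m j) 1 : Ploc) := by
        have h0 : (LocalizedModule.mk (x j) 1 : Ploc)
            = LocalizedModule.mkLinearMap J.primeCompl P (x j) := rfl
        rw [h0, hx]
        simp only [map_sum, map_smul, LocalizedModule.mkLinearMap_apply]
      rw [hmk, ← Finset.add_sum_erase _ _ (Finset.mem_univ m₀)]
      have hab : e m₀ • (LocalizedModule.mk (p m₀ j) 1 : Ploc) +
          (∑ m ∈ Finset.univ.erase m₀, e m • (LocalizedModule.mk (p m j) 1 : Ploc))
          - LocalizedModule.mk (p m₀ j) 1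
          = (e m₀ - 1) • (LocalizedModule.mk (p m₀ j) 1 : Ploc) +
          ∑ m ∈ Finset.univ.erase m₀, e m • (LocalizedModule.mk (p m j) 1 : Ploc) := by
        rw [sub_smul, one_smul]
        abel
      rw [hab]
      refine Submodule.add_mem _ (hsmul _ _ (he1 m₀)) (Submodule.sum_mem _ fun m hm => ?_)
      exact hsmul _ _ (he2 m m₀ (Finset.ne_of_mem_erase hm).symm)
    -- step 2 : the images of the `x j` span the localization, by Nakayama
    set N : Submodule Aloc Ploc :=
      Submodule.span Aloc (Set.range fun j => (LocalizedModule.mk (x j) 1 : Ploc)) with hN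
    have hNtop : N = ⊤ := by
      rw [← IsLocalRing.map_mkQ_eq_top]
      set K := (IsLocalRing.maximalIdeal Aloc) • (⊤ : Submodule Aloc Ploc) with hK
      have hp0 : Submodule.span Aloc
          (Set.range fun j => (LocalizedModule.mk (p m₀ j) 1 : Ploc)) = ⊤ := hp m₀
      have himg : K.mkQ '' (Set.range fun j => (LocalizedModule.mk (p m₀ j) 1 : Ploc))
          = K.mkQ '' (Set.range fun j => (LocalizedModule.mk (x j) 1 : Ploc)) := by
        rw [← Set.range_comp, ← Set.range_comp]
        refine congrArg Set.range (funext fun j => ?_)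
        simp only [Function.comp_apply, Submodule.mkQ_apply]
        exact ((Submodule.Quotient.eq K).mpr
          (by simpa using Submodule.neg_mem _ (key j))).symm.symm
      rw [eq_top_iff]
      calc (⊤ : Submodule Aloc (Ploc ⧸ K))
          = Submodule.map K.mkQ (Submodule.span Aloc (Set.range fun j =>
              (LocalizedModule.mk (p m₀ j) 1 : Ploc))) := by
            rw [hp0, Submodule.map_top, Submodule.range_mkQ]
        _ ≤ Submodule.map K.mkQ N := by
            rw [hN, Submodule.map_span, Submodule.map_span, himg]
    -- step 3 : surjectivity of the localized map
    have hrange : N ≤ LinearMap.range F := by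
      rw [hN]
      refine Submodule.span_le.mpr ?_
      rintro _ ⟨j, rfl⟩
      refine ⟨LocalizedModule.mk (Finsupp.single j 1) 1, ?_⟩
      rw [hF]
      rw [LocalizedModule.map_mk, hfx]
    have hsurj : Function.Surjective F := by
      rw [← LinearMap.range_eq_top]
      exact top_unique (hNtop ▸ hrange)
    -- step 4 : injectivity of the localized map
    obtain ⟨bP⟩ := hrank J hJ.isPrime
    let e' := IsLocalizedModule.iso J.primeCompl
      (Finsupp.mapRange.linearMap (α := Fin n) (Algebra.linearMap A Aloc))
    let e'' : LocalizedModule J.primeCompl (Fin n →₀ A) ≃ₗ[Aloc] (Fin n →₀ Aloc) :=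
      { e' with
        toLinearMap := e'.toLinearMap.extendScalarsOfIsLocalization J.primeCompl Aloc }
    haveI : Module.Finite Aloc (Fin n →₀ Aloc) :=
      Module.Finite.equiv (Finsupp.linearEquivFunOnFinite Aloc Aloc (Fin n)).symm
    set G : (Fin n →₀ Aloc) →ₗ[Aloc] (Fin n →₀ Aloc) :=
      (bP.repr.toLinearMap.comp F).comp e''.symm.toLinearMap with hG
    have he'' : ∀ z, e''.symm (e'' z) = z := fun z => e''.symm_apply_apply z
    have hGsurj : Function.Surjective G := by
      rw [hG]
      simp only [LinearMap.coe_comp, LinearEquiv.coe_coe]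
      exact bP.repr.surjective.comp (hsurj.comp e''.symm.surjective)
    have hGinj : Function.Injective G :=
      OrzechProperty.injective_of_surjective_endomorphism G hGsurj
    have hinj : Function.Injective F := by
      have hcomp : ⇑bP.repr ∘ ⇑F = ⇑G ∘ ⇑e'' := by
        funext z
        simp only [Function.comp_apply, hG, LinearMap.coe_comp, LinearEquiv.coe_coe,
          LinearMap.coe_comp, he'']
      have h1 : Function.Injective (⇑bP.repr ∘ ⇑F) := by
        rw [hcomp]
        exact hGinj.comp e''.injective
      exact Function.Injective.of_comp h1
    exact ⟨hinj, hsurj⟩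
  exact ⟨Module.Basis.ofRepr (LinearEquiv.ofBijective f hbij).symm⟩
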